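/- Let (F^{α,a})_{a≥0} be a collection of formal power series satisfying the descendant equations (string), (dilaton), (TRR), (REL) with unit A. Define F^α ∈ ℂ[[t^1,…,t^N]] by F^α := F^{α,0} evaluated at t^β_0 = t^β and t^β_b = 0 for b ≥ 1, set c^α_{βγ} := ∂²F^α/∂t^β∂t^γ, and define Ω^{α,d}_β := (∂F^{α,d}/∂t^β_0) evaluated at t^β_0 = t^β and t^β_b = 0 for b ≥ 1 (d ≥ 0), with Ω^{α,−1}_β := δ^α_β. Then: (i) A^μ c^α_{μβ} = δ^α_β for all α,β; (ii) c^α_{βμ} c^μ_{γδ} = c^α_{γμ} c^μ_{βδ} for all α,β,γ,δ; (iii) ∂Ω^{α,d}_β/∂t^γ = c^μ_{γβ} Ω^{α,d−1}_μ for all d ≥ 0 and all α,β,γ. In other words, (F^α) is the vector potential of a flat F-manifold with unit A^α ∂/∂t^α and (Ω^{α,d}_β) is a calibration of it. -/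

import Mathlib

/-!
Common setup: formal power series in the variables `t^β_b` (β ∈ Fin N, b ∈ ℕ),
the descendant/ancestor vector potential equations of a (calibrated) flat F-manifold,
and the generalized Givental upper/lower triangular group actions, following
Arsie–Buryak–Lorenzoni–Rossi, "Semisimple flat F-manifolds in higher genus".
-/

noncomputable section
open MvPowerSeries

/-- Index of the variable `t^β_b`. -/
abbrev Idx (N : ℕ) := Fin N × ℕ

/-- The ring of formal power series in the variables `t^β_b`. -/
abbrev PS (N : ℕ) := MvPowerSeries (Idx N) ℂ

variable {N : ℕ}

/-- Build a power series from its coefficient function. -/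
def ofCoeff (f : (Idx N →₀ ℕ) → ℂ) : PS N := f

/-- The coefficient of a power series at a monomial. -/
def cf (m : Idx N →₀ ℕ) (F : PS N) : ℂ := MvPowerSeries.coeff (R := ℂ) m F

/-- The partial derivative `∂/∂t^β_b` (= `∂/∂q^β_b`) of a formal power series. -/
def pd (v : Idx N) (F : PS N) : PS N :=
  ofCoeff fun m => ((m v + 1 : ℕ) : ℂ) * cf (m + Finsupp.single v 1) F

/-- The series `q^β_b = t^β_b − A^β δ_{b,1}`, for series centered at the point `p`
(i.e. written in the variables `X_{(β,b)} = t^β_b − p^β δ_{b,0}`):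
`q^β_b = X_{(β,b)} + p^β δ_{b,0} − A^β δ_{b,1}`. -/
def qs (p A : Fin N → ℂ) (v : Idx N) : PS N :=
  X v + C (σ := Idx N) (R := ℂ) ((if v.2 = 0 then p v.1 else 0) - (if v.2 = 1 then A v.1 else 0))

/-- Coefficientwise well-defined infinite sum `Σ_{β, b ≥ 0} X_{(β,b+1)} · G (β,b)`
(used in the string equation). -/
def stringX (G : Idx N → PS N) : PS N :=
  ofCoeff fun m =>
    ∑ v ∈ m.support.filter (fun v => 1 ≤ v.2),
      cf (m - Finsupp.single v 1) (G (v.1, v.2 - 1))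

/-- Coefficientwise well-defined infinite sum `Σ_{β, b ≥ 0} X_{(β,b)} · G (β,b)`
(used in the dilaton equation). -/
def dilX (G : Idx N → PS N) : PS N :=
  ofCoeff fun m => ∑ v ∈ m.support, cf (m - Finsupp.single v 1) (G v)

/-- `(−1)^k` as a complex number. -/
def sg (k : ℕ) : ℂ := if Even k then 1 else -1

/-- `(−1)^d` for an integer `d`. -/
def sgZ (d : ℤ) : ℂ := if Even d then 1 else -1

/-- The extension of the collection `F^{α,a}` to all `a ∈ ℤ` by the convention
`F^{α,a} := (−1)^{a+1} q^α_{−a−1}` for `a < 0`. -/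
def FZ (p A : Fin N → ℂ) (F : ℕ → Fin N → PS N) (a : ℤ) (α : Fin N) : PS N :=
  if 0 ≤ a then F a.toNat α
  else C (σ := Idx N) (R := ℂ) (if Even a then -1 else 1) * qs p A (α, (-a - 1).toNat)

/-- The descendant vector potential equations (string, dilaton, TRR, REL) for a collection
`F^{α,a}` of formal power series centered at `p`, with unit `A`.  All infinite sums over
`b ≥ 0` are the coefficientwise (well-defined) ones. -/
def IsDescendant (p A : Fin N → ℂ) (F : ℕ → Fin N → PS N) : Prop :=
  -- string equation: Σ_{b≥0} q^β_{b+1} ∂F^{α,a}/∂q^β_b = −F^{α,a−1}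
  (∀ (a : ℤ) (α : Fin N),
      stringX (fun v => pd v (FZ p A F a α))
        - ∑ β, C (σ := Idx N) (R := ℂ) (A β) * pd (β, 0) (FZ p A F a α)
      = - FZ p A F (a - 1) α) ∧
  -- dilaton equation: Σ_{b≥0} q^β_b ∂F^{α,a}/∂q^β_b = F^{α,a}
  (∀ (a : ℤ) (α : Fin N),
      dilX (fun v => pd v (FZ p A F a α))
        + ∑ β, C (σ := Idx N) (R := ℂ) (p β) * pd (β, 0) (FZ p A F a α)
        - ∑ β, C (σ := Idx N) (R := ℂ) (A β) * pd (β, 1) (FZ p A F a α)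
      = FZ p A F a α) ∧
  -- topological recursion relation
  (∀ (b c : ℕ) (α β γ : Fin N),
      pd (β, b + 1) (pd (γ, c) (F 0 α))
      = ∑ μ, pd (β, b) (F 0 μ) * pd (μ, 0) (pd (γ, c) (F 0 α))) ∧
  -- the relation controlling descendants
  (∀ (a b : ℕ) (α β : Fin N),
      pd (β, b) (F (a + 1) α) + pd (β, b + 1) (F a α)
      = ∑ μ, pd (μ, 0) (F a α) * pd (β, b) (F 0 μ))

/-- A collection of ancestor vector potentials: descendant vector potentials centered at `0`
all of whose first partial derivatives vanish at `t^*_* = 0`. -/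
def IsAncestor (A : Fin N → ℂ) (F : ℕ → Fin N → PS N) : Prop :=
  IsDescendant 0 A F ∧
  ∀ (a : ℕ) (α : Fin N) (v : Idx N),
    MvPowerSeries.constantCoeff (σ := Idx N) (R := ℂ) (pd v (F a α)) = 0

/-- The monomial substitution: for a monomial `m`, the product `∏_v (P v)^{m v}`. -/
def monSubst (P : Idx N → PS N) (m : Idx N →₀ ℕ) : PS N :=
  m.prod fun v k => P v ^ k

/-- The partial derivative `∂/∂t^β` on power series in finitely many variables `t^1,…,t^N`. -/
def pdN (β : Fin N) (F : MvPowerSeries (Fin N) ℂ) : MvPowerSeries (Fin N) ℂ :=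
  (fun d => ((d β + 1 : ℕ) : ℂ) * MvPowerSeries.coeff (R := ℂ) (d + Finsupp.single β 1) F :
    (Fin N →₀ ℕ) → ℂ)

/-- Restriction of a power series in the variables `t^β_b` to `t^β_b = 0` for `b ≥ 1`,
renaming `t^β_0 = t^β`. -/
def res (F : PS N) : MvPowerSeries (Fin N) ℂ :=
  (fun d => cf (Finsupp.mapDomain (fun β => (β, (0 : ℕ))) d) F : (Fin N →₀ ℕ) → ℂ)

/-- The structure constants `c^α_{βγ} := ∂²F^α/∂t^β∂t^γ` of the restricted genus-0 potential. -/
def cN (F : ℕ → Fin N → PS N) (α β γ : Fin N) : MvPowerSeries (Fin N) ℂ :=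
  pdN β (pdN γ (res (F 0 α)))

/-- The calibration `Ω^{α,d}_β := (∂F^{α,d}/∂t^β_0)|_{t^*_{≥1}=0}`. -/
def ΩN (F : ℕ → Fin N → PS N) (d : ℕ) (α β : Fin N) : MvPowerSeries (Fin N) ℂ :=
  res (pd (β, 0) (F d α))

namespace Aux

variable {N : ℕ}

lemma PS.ext' {F G : PS N} (h : ∀ m, cf m F = cf m G) : F = G :=
  MvPowerSeries.ext h

@[simp] lemma cf_ofCoeff (f : (Idx N →₀ ℕ) → ℂ) (m : Idx N →₀ ℕ) :
    cf m (ofCoeff f) = f m := rfl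

@[simp] lemma cf_pd (v : Idx N) (F : PS N) (m : Idx N →₀ ℕ) :
    cf m (pd v F) = ((m v + 1 : ℕ) : ℂ) * cf (m + Finsupp.single v 1) F := rfl

@[simp] lemma cf_zero (m : Idx N →₀ ℕ) : cf m (0 : PS N) = 0 :=
  map_zero _

@[simp] lemma cf_one_zero : cf (0 : Idx N →₀ ℕ) (1 : PS N) = 1 := by
  simp [cf, MvPowerSeries.coeff_one]

@[simp] lemma cf_add (F G : PS N) (m : Idx N →₀ ℕ) : cf m (F + G) = cf m F + cf m G :=
  map_add _ _ _

@[simp] lemma cf_neg (F : PS N) (m : Idx N →₀ ℕ) : cf m (-F) = - cf m F :=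
  map_neg _ _

@[simp] lemma cf_sub (F G : PS N) (m : Idx N →₀ ℕ) : cf m (F - G) = cf m F - cf m G :=
  map_sub _ _ _

@[simp] lemma cf_sum {ι : Type*} (s : Finset ι) (f : ι → PS N) (m : Idx N →₀ ℕ) :
    cf m (∑ i ∈ s, f i) = ∑ i ∈ s, cf m (f i) :=
  map_sum _ _ _

@[simp] lemma cf_Cmul (c : ℂ) (F : PS N) (m : Idx N →₀ ℕ) :
    cf m (C (σ := Idx N) (R := ℂ) c * F) = c * cf m F := by
  simp [cf, MvPowerSeries.coeff_C_mul]

lemma cf_mul (F G : PS N) (m : Idx N →₀ ℕ) :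
    cf m (F * G) = ∑ x ∈ Finset.HasAntidiagonal.antidiagonal m, cf x.1 F * cf x.2 G :=
  MvPowerSeries.coeff_mul m F G

lemma pd_add (v : Idx N) (F G : PS N) : pd v (F + G) = pd v F + pd v G := by
  apply PS.ext'; intro m; simp [mul_add]

lemma pd_neg (v : Idx N) (F : PS N) : pd v (-F) = - pd v F := by
  apply PS.ext'; intro m; simp

lemma pd_sub (v : Idx N) (F G : PS N) : pd v (F - G) = pd v F - pd v G := by
  apply PS.ext'; intro m; simp [mul_sub]

lemma pd_sum (v : Idx N) {ι : Type*} (s : Finset ι) (f : ι → PS N) :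
    pd v (∑ i ∈ s, f i) = ∑ i ∈ s, pd v (f i) := by
  apply PS.ext'; intro m; simp [Finset.mul_sum]

lemma pd_Cmul (v : Idx N) (c : ℂ) (F : PS N) :
    pd v (C (σ := Idx N) (R := ℂ) c * F) = C (σ := Idx N) (R := ℂ) c * pd v F := by
  apply PS.ext'; intro m; simp; ring

lemma pd_C (v : Idx N) (c : ℂ) : pd v (C (σ := Idx N) (R := ℂ) c) = 0 := by
  apply PS.ext'; intro m
  have : m + Finsupp.single v 1 ≠ 0 := by
    intro h
    have := DFunLike.congr_fun h v
    simp at this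
  have h0 : cf (m + Finsupp.single v 1) (C (σ := Idx N) (R := ℂ) c) = 0 := by
    simp [cf, MvPowerSeries.coeff_C, this]
  simp [h0]

lemma cf_X (w : Idx N) (m : Idx N →₀ ℕ) :
    cf m (X w : PS N) = if m = Finsupp.single w 1 then 1 else 0 := by
  simp [cf, MvPowerSeries.coeff_X]

lemma pd_X (v w : Idx N) : pd v (X w : PS N) = if v = w then 1 else 0 := by
  apply PS.ext'; intro m
  rw [cf_pd, cf_X]
  by_cases hvw : v = w
  · subst hvw
    rw [if_pos rfl]
    by_cases hm : m = 0
    · subst hm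
      rw [if_pos (zero_add _), cf_one_zero]
      simp
    · rw [if_neg (fun h => hm (by
        simpa using add_right_cancel (h.trans (zero_add (Finsupp.single v 1)).symm)))]
      have : cf m (1 : PS N) = 0 := by
        simp [cf, MvPowerSeries.coeff_one, hm]
      rw [this, mul_zero]
  · rw [if_neg (fun h => by
      have := DFunLike.congr_fun h v
      simp [Finsupp.single_apply, Ne.symm hvw] at this), if_neg hvw, cf_zero, mul_zero]

lemma pd_comm (v w : Idx N) (F : PS N) : pd v (pd w F) = pd w (pd v F) := by
  apply PS.ext'; intro m
  simp only [cf_pd]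
  rw [add_right_comm]
  by_cases hvw : v = w
  · subst hvw; ring
  · rw [Finsupp.add_apply, Finsupp.add_apply, Finsupp.single_apply, Finsupp.single_apply,
      if_neg hvw, if_neg (Ne.symm hvw)]
    ring

def eIdx (N : ℕ) : Fin N ↪ Idx N := ⟨fun β => (β, 0), fun a b h => congrArg Prod.fst h⟩

lemma sum_shift (m : Idx N →₀ ℕ) (v : Idx N) (f : (Idx N →₀ ℕ) → (Idx N →₀ ℕ) → ℂ) :
    ∑ x ∈ Finset.HasAntidiagonal.antidiagonal (m + Finsupp.single v 1), ((x.1 : Idx N →₀ ℕ) v : ℂ) * f x.1 x.2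
    = ∑ x ∈ Finset.HasAntidiagonal.antidiagonal m, (((x.1 : Idx N →₀ ℕ) v : ℂ) + 1) * f (x.1 + Finsupp.single v 1) x.2 := by
  rw [← Finset.sum_filter_of_ne (p := fun x => x.1 v ≠ 0)
    (by intro x hx h; intro h0; exact h (by rw [h0]; simp))]
  refine Finset.sum_nbij' (i := fun x => (x.1 - Finsupp.single v 1, x.2))
    (j := fun y => (y.1 + Finsupp.single v 1, y.2)) ?_ ?_ ?_ ?_ ?_
  · rintro ⟨x1, x2⟩ hx
    simp only [Finset.mem_filter, Finset.HasAntidiagonal.mem_antidiagonal] at hx ⊢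
    obtain ⟨hsum, hne⟩ := hx
    have hle : Finsupp.single v 1 ≤ x1 := by
      rw [Finsupp.single_le_iff]; omega
    have : (x1 - Finsupp.single v 1) + x2 + Finsupp.single v 1 = m + Finsupp.single v 1 := by
      rw [add_right_comm, tsub_add_cancel_of_le hle, hsum]
    exact add_right_cancel this
  · rintro ⟨y1, y2⟩ hy
    simp only [Finset.HasAntidiagonal.mem_antidiagonal] at hy
    simp only [Finset.mem_filter, Finset.HasAntidiagonal.mem_antidiagonal]
    constructor
    · rw [add_right_comm, hy]
    · simp
  · rintro ⟨x1, x2⟩ hx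
    simp only [Finset.mem_filter, Finset.HasAntidiagonal.mem_antidiagonal] at hx
    have hle : Finsupp.single v 1 ≤ x1 := by
      rw [Finsupp.single_le_iff]; omega
    simp [tsub_add_cancel_of_le hle]
  · rintro ⟨y1, y2⟩ hy
    simp
  · rintro ⟨x1, x2⟩ hx
    simp only [Finset.mem_filter, Finset.HasAntidiagonal.mem_antidiagonal] at hx
    have hle : Finsupp.single v 1 ≤ x1 := by
      rw [Finsupp.single_le_iff]; omega
    have h1 : ((x1 - Finsupp.single v 1 : Idx N →₀ ℕ)) v = x1 v - 1 := by
      rw [Finsupp.tsub_apply, Finsupp.single_eq_same]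
    rw [tsub_add_cancel_of_le hle, h1]
    have : ((x1 v - 1 : ℕ) : ℂ) + 1 = (x1 v : ℂ) := by
      have : 1 ≤ x1 v := by omega
      push_cast [this]
      ring
    rw [this]


lemma sum_ad_swap (n : Idx N →₀ ℕ) (f : (Idx N →₀ ℕ) → (Idx N →₀ ℕ) → ℂ) :
    ∑ x ∈ Finset.HasAntidiagonal.antidiagonal n, f x.1 x.2 = ∑ x ∈ Finset.HasAntidiagonal.antidiagonal n, f x.2 x.1 := by
  rw [← Finset.HasAntidiagonal.map_swap_antidiagonal, Finset.sum_map]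
  simp [Function.Embedding.coeFn_mk]


lemma pd_mul (v : Idx N) (F G : PS N) : pd v (F * G) = pd v F * G + F * pd v G := by
  apply PS.ext'; intro m
  rw [cf_add, cf_pd, cf_mul, cf_mul, cf_mul, Finset.mul_sum]
  have key : ∀ x ∈ Finset.HasAntidiagonal.antidiagonal (m + Finsupp.single v 1),
      ((m v + 1 : ℕ) : ℂ) * (cf x.1 F * cf x.2 G)
      = ((x.1 : Idx N →₀ ℕ) v : ℂ) * (cf x.1 F * cf x.2 G)
        + ((x.2 : Idx N →₀ ℕ) v : ℂ) * (cf x.1 F * cf x.2 G) := by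
    rintro ⟨x1, x2⟩ hx
    simp only [Finset.HasAntidiagonal.mem_antidiagonal] at hx
    have : x1 v + x2 v = m v + 1 := by
      have := DFunLike.congr_fun hx v
      simpa using this
    push_cast [← this]
    ring
  rw [Finset.sum_congr rfl key, Finset.sum_add_distrib]
  congr 1
  · rw [sum_shift m v (fun a b => cf a F * cf b G)]
    refine Finset.sum_congr rfl ?_
    rintro ⟨x1, x2⟩ hx
    rw [cf_pd]
    push_cast
    ring
  · rw [sum_ad_swap (m + Finsupp.single v 1) (fun a b => ((b : Idx N →₀ ℕ) v : ℂ) * (cf a F * cf b G))]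
    rw [sum_shift m v (fun a b => cf b F * cf a G)]
    rw [sum_ad_swap m (fun a b => (((a : Idx N →₀ ℕ) v : ℂ) + 1) * (cf b F * cf (a + Finsupp.single v 1) G))]
    refine Finset.sum_congr rfl ?_
    rintro ⟨x1, x2⟩ hx
    rw [cf_pd]
    push_cast
    ring


lemma coeff_res (F : PS N) (d : Fin N →₀ ℕ) :
    MvPowerSeries.coeff (R := ℂ) d (res F) = cf (Finsupp.embDomain (eIdx N) d) F := by
  rw [Finsupp.embDomain_eq_mapDomain]
  rfl


lemma NS.ext' {F G : MvPowerSeries (Fin N) ℂ}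
    (h : ∀ d, MvPowerSeries.coeff (R := ℂ) d F = MvPowerSeries.coeff (R := ℂ) d G) : F = G :=
  MvPowerSeries.ext h


lemma support_subset_range {x y : Idx N →₀ ℕ} {n : Fin N →₀ ℕ}
    (hx : x + y = Finsupp.embDomain (eIdx N) n) : ↑x.support ⊆ Set.range (eIdx N) := by
  intro a ha
  simp only [Finset.mem_coe, Finsupp.mem_support_iff] at ha
  have hmem : a ∈ (Finsupp.embDomain (eIdx N) n).support := by
    rw [← hx, Finsupp.mem_support_iff, Finsupp.add_apply]
    intro h0
    exact ha (by omega)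
  rw [Finsupp.support_embDomain, Finset.mem_map] at hmem
  obtain ⟨b, _, hb⟩ := hmem
  exact ⟨b, hb⟩

/-- comap composed with embDomain. -/

lemma comap_emb (u : Fin N →₀ ℕ) :
    Finsupp.comapDomain (eIdx N) (Finsupp.embDomain (eIdx N) u)
      ((eIdx N).injective.injOn) = u := by
  ext a
  rw [Finsupp.comapDomain_apply, Finsupp.embDomain_apply_self]


lemma sum_ad_emb (n : Fin N →₀ ℕ) (f : (Idx N →₀ ℕ) → (Idx N →₀ ℕ) → ℂ) :
    ∑ x ∈ Finset.HasAntidiagonal.antidiagonal (Finsupp.embDomain (eIdx N) n), f x.1 x.2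
    = ∑ y ∈ Finset.HasAntidiagonal.antidiagonal n,
        f (Finsupp.embDomain (eIdx N) y.1) (Finsupp.embDomain (eIdx N) y.2) := by
  refine (Finset.sum_nbij'
    (i := fun x => (Finsupp.comapDomain (eIdx N) x.1 ((eIdx N).injective.injOn),
                    Finsupp.comapDomain (eIdx N) x.2 ((eIdx N).injective.injOn)))
    (j := fun y => (Finsupp.embDomain (eIdx N) y.1, Finsupp.embDomain (eIdx N) y.2))
    ?_ ?_ ?_ ?_ ?_)
  · rintro ⟨x1, x2⟩ hx
    simp only [Finset.HasAntidiagonal.mem_antidiagonal] at hx ⊢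
    have hs1 := support_subset_range hx
    have hs2 := support_subset_range (by rw [add_comm] at hx; exact hx)
    apply Finsupp.embDomain_injective (eIdx N)
    rw [Finsupp.embDomain_add, Finsupp.embDomain_comapDomain hs1,
      Finsupp.embDomain_comapDomain hs2, hx]
  · rintro ⟨y1, y2⟩ hy
    simp only [Finset.HasAntidiagonal.mem_antidiagonal] at hy ⊢
    rw [← Finsupp.embDomain_add, hy]
  · rintro ⟨x1, x2⟩ hx
    simp only [Finset.HasAntidiagonal.mem_antidiagonal] at hx
    have hs1 := support_subset_range hx
    have hs2 := support_subset_range (by rw [add_comm] at hx; exact hx)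
    simp only [Prod.mk.injEq]
    exact ⟨Finsupp.embDomain_comapDomain hs1, Finsupp.embDomain_comapDomain hs2⟩
  · rintro ⟨y1, y2⟩ hy
    simp only [Prod.mk.injEq]
    exact ⟨comap_emb y1, comap_emb y2⟩
  · rintro ⟨x1, x2⟩ hx
    simp only [Finset.HasAntidiagonal.mem_antidiagonal] at hx
    have hs1 := support_subset_range hx
    have hs2 := support_subset_range (by rw [add_comm] at hx; exact hx)
    rw [Finsupp.embDomain_comapDomain hs1, Finsupp.embDomain_comapDomain hs2]

lemma res_mul (F G : PS N) : res (F * G) = res F * res G := by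
  apply NS.ext'; intro d
  rw [coeff_res, MvPowerSeries.coeff_mul, cf_mul, sum_ad_emb d (fun a b => cf a F * cf b G)]
  exact Finset.sum_congr rfl fun y _ => by rw [coeff_res, coeff_res]


lemma res_add (F G : PS N) : res (F + G) = res F + res G := by
  apply NS.ext'; intro d
  rw [map_add, coeff_res, coeff_res, coeff_res, cf_add]


lemma res_neg (F : PS N) : res (-F) = - res F := by
  apply NS.ext'; intro d
  rw [map_neg, coeff_res, coeff_res]
  exact map_neg _ _


lemma res_sub (F G : PS N) : res (F - G) = res F - res G := by
  apply NS.ext'; intro d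
  rw [map_sub, coeff_res, coeff_res, coeff_res]
  exact map_sub _ _ _


lemma res_sum {ι : Type*} (s : Finset ι) (f : ι → PS N) :
    res (∑ i ∈ s, f i) = ∑ i ∈ s, res (f i) := by
  apply NS.ext'; intro d
  rw [map_sum, coeff_res]
  unfold cf
  rw [map_sum]
  exact Finset.sum_congr rfl fun i _ => (coeff_res (f i) d).symm


lemma res_zero : res (0 : PS N) = 0 := by
  apply NS.ext'; intro d
  rw [coeff_res]
  simp [cf]


lemma res_one : res (1 : PS N) = 1 := by
  apply NS.ext'; intro d
  rw [coeff_res]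
  unfold cf
  rw [MvPowerSeries.coeff_one, MvPowerSeries.coeff_one]
  have : Finsupp.embDomain (eIdx N) d = 0 ↔ d = 0 := Finsupp.embDomain_eq_zero
  simp only [this]


lemma res_Cmul (c : ℂ) (F : PS N) :
    res (MvPowerSeries.C (σ := Idx N) (R := ℂ) c * F) = MvPowerSeries.C (σ := Fin N) (R := ℂ) c * res F := by
  apply NS.ext'; intro d
  rw [coeff_res, MvPowerSeries.coeff_C_mul, coeff_res]
  unfold cf
  rw [MvPowerSeries.coeff_C_mul]


lemma res_ite (P : Prop) [Decidable P] (F G : PS N) :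
    res (if P then F else G) = if P then res F else res G := by
  split <;> rfl


lemma coeff_pdN (β : Fin N) (F : MvPowerSeries (Fin N) ℂ) (d : Fin N →₀ ℕ) :
    MvPowerSeries.coeff (R := ℂ) d (pdN β F)
    = ((d β + 1 : ℕ) : ℂ) * MvPowerSeries.coeff (R := ℂ) (d + Finsupp.single β 1) F := rfl


lemma res_pd0 (β : Fin N) (F : PS N) : res (pd (β, 0) F) = pdN β (res F) := by
  apply NS.ext'; intro d
  rw [coeff_res, coeff_pdN, coeff_res, cf_pd]
  have h1 : (Finsupp.embDomain (eIdx N) d) (β, 0) = d β := Finsupp.embDomain_apply_self _ _ _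
  have h2 : Finsupp.embDomain (eIdx N) (d + Finsupp.single β 1)
      = Finsupp.embDomain (eIdx N) d + Finsupp.single ((β : Fin N), (0 : ℕ)) 1 := by
    rw [Finsupp.embDomain_add, Finsupp.embDomain_single]
    rfl
  rw [h1, h2]


lemma cf_stringX (G : Idx N → PS N) (m : Idx N →₀ ℕ) :
    cf m (stringX G)
    = ∑ v ∈ m.support.filter (fun v => 1 ≤ v.2),
        cf (m - Finsupp.single v 1) (G (v.1, v.2 - 1)) := rfl


lemma res_stringX (G : Idx N → PS N) : res (stringX G) = 0 := by
  apply NS.ext'; intro d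
  rw [coeff_res]
  unfold cf
  rw [map_zero]
  rw [show MvPowerSeries.coeff (R := ℂ) (Finsupp.embDomain (eIdx N) d) (stringX G)
    = cf (Finsupp.embDomain (eIdx N) d) (stringX G) from rfl, cf_stringX]
  apply Finset.sum_eq_zero
  intro v hv
  exfalso
  simp only [Finset.mem_filter, Finsupp.support_embDomain, Finset.mem_map] at hv
  obtain ⟨⟨b, _, hb⟩, h2⟩ := hv
  rw [← hb] at h2
  exact Nat.not_succ_le_zero 0 h2


lemma pd0_stringX (β : Fin N) (G : Idx N → PS N) :
    pd (β, 0) (stringX G) = stringX (fun v => pd (β, 0) (G v)) := by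
  apply PS.ext'; intro m
  rw [cf_pd, cf_stringX, cf_stringX]
  set s : Idx N →₀ ℕ := Finsupp.single ((β : Fin N), (0 : ℕ)) 1 with hs
  have hsupp : (m + s).support.filter (fun v => 1 ≤ v.2)
      = m.support.filter (fun v => 1 ≤ v.2) := by
    ext v
    simp only [Finset.mem_filter, Finsupp.mem_support_iff, Finsupp.add_apply, hs,
      Finsupp.single_apply]
    constructor
    · rintro ⟨h1, h2⟩
      refine ⟨?_, h2⟩
      have hne : ((β, 0) : Idx N) ≠ v := fun h => by rw [← h] at h2; simp at h2
      rw [if_neg hne, add_zero] at h1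
      exact h1
    · rintro ⟨h1, h2⟩
      exact ⟨by omega, h2⟩
  rw [hsupp, Finset.mul_sum]
  refine Finset.sum_congr rfl ?_
  intro v hv
  simp only [Finset.mem_filter, Finsupp.mem_support_iff] at hv
  obtain ⟨hv1, hv2⟩ := hv
  have hvne : v ≠ ((β : Fin N), (0 : ℕ)) := by
    intro h
    rw [h] at hv2
    simp at hv2
  have key : m + s - Finsupp.single v 1 = m - Finsupp.single v 1 + s := by
    ext x
    rw [Finsupp.tsub_apply, Finsupp.add_apply, Finsupp.add_apply, Finsupp.tsub_apply, hs,
      Finsupp.single_apply, Finsupp.single_apply]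
    by_cases hxv : v = x
    · subst hxv
      rw [if_neg (by exact fun h => hvne h.symm)]
      simp
    · rw [if_neg hxv]
      omega
  have key2 : (m - Finsupp.single v 1 : Idx N →₀ ℕ) ((β : Fin N), (0 : ℕ)) = m (β, 0) := by
    rw [Finsupp.tsub_apply, Finsupp.single_apply, if_neg hvne, Nat.sub_zero]
  rw [key, cf_pd, key2]


end Aux
namespace Aux

variable {N : ℕ}

lemma cN_eq (F : ℕ → Fin N → PS N) (α β γ : Fin N) :
    cN F α β γ = res (pd (β, 0) (pd (γ, 0) (F 0 α))) := by
  rw [cN, ← res_pd0, ← res_pd0]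

lemma res_pd0_sum_mul (γ : Fin N) (G H : Fin N → PS N) :
    res (pd (γ, 0) (∑ μ, G μ * H μ))
    = ∑ μ, (res (pd (γ, 0) (G μ)) * res (H μ) + res (G μ) * res (pd (γ, 0) (H μ))) := by
  rw [pd_sum, res_sum]
  refine Finset.sum_congr rfl fun μ _ => ?_
  rw [pd_mul, res_add, res_mul, res_mul]

section Main

variable (p A : Fin N → ℂ) (F : ℕ → Fin N → PS N)

/-- restricted TRR -/
lemma Q0 (hTRR : ∀ (b c : ℕ) (α β γ : Fin N),
      pd (β, b + 1) (pd (γ, c) (F 0 α))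
      = ∑ μ, pd (β, b) (F 0 μ) * pd (μ, 0) (pd (γ, c) (F 0 α)))
    (b : ℕ) (α β γ : Fin N) :
    res (pd (γ, 0) (pd (β, b + 1) (F 0 α)))
    = ∑ μ, res (pd (β, b) (F 0 μ)) * res (pd (γ, 0) (pd (μ, 0) (F 0 α))) := by
  have h := congrArg res (hTRR b 0 α β γ)
  rw [res_sum, pd_comm] at h
  rw [h]
  refine Finset.sum_congr rfl fun μ _ => ?_
  rw [res_mul, pd_comm]

lemma Qall (hTRR : ∀ (b c : ℕ) (α β γ : Fin N),
      pd (β, b + 1) (pd (γ, c) (F 0 α))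
      = ∑ μ, pd (β, b) (F 0 μ) * pd (μ, 0) (pd (γ, c) (F 0 α)))
    (hREL : ∀ (a b : ℕ) (α β : Fin N),
      pd (β, b) (F (a + 1) α) + pd (β, b + 1) (F a α)
      = ∑ μ, pd (μ, 0) (F a α) * pd (β, b) (F 0 μ)) :
    ∀ (d b : ℕ) (α β γ : Fin N),
    res (pd (γ, 0) (pd (β, b + 1) (F d α)))
    = ∑ μ, res (pd (β, b) (F 0 μ)) * res (pd (γ, 0) (pd (μ, 0) (F d α))) := by
  intro d
  induction d with
  | zero => exact fun b α β γ => Q0 F hTRR b α β γ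
  | succ d ih =>
    -- auxiliary: the (d+1)-version of the second-derivative formula
    have star : ∀ (α ν γ : Fin N),
        res (pd (γ, 0) (pd (ν, 0) (F (d + 1) α)))
        = ∑ μ, res (pd (μ, 0) (F d α)) * res (pd (γ, 0) (pd (ν, 0) (F 0 μ))) := by
      intro α ν γ
      have h2 : res (pd (γ, 0) (pd (ν, 0) (F (d + 1) α)))
            + res (pd (γ, 0) (pd (ν, 0 + 1) (F d α)))
          = ∑ μ, (res (pd (γ, 0) (pd (μ, 0) (F d α))) * res (pd (ν, 0) (F 0 μ))
              + res (pd (μ, 0) (F d α)) * res (pd (γ, 0) (pd (ν, 0) (F 0 μ)))) := by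
        rw [← res_add, ← pd_add, hREL d 0 α ν, res_pd0_sum_mul]
      have hB := ih 0 α ν γ
      have h3 := eq_sub_of_add_eq h2
      rw [hB, ← Finset.sum_sub_distrib] at h3
      rw [h3]
      refine Finset.sum_congr rfl fun μ _ => ?_
      ring
    intro b α β γ
    have h2 : res (pd (γ, 0) (pd (β, b + 1) (F (d + 1) α)))
          + res (pd (γ, 0) (pd (β, b + 1 + 1) (F d α)))
        = ∑ μ, (res (pd (γ, 0) (pd (μ, 0) (F d α))) * res (pd (β, b + 1) (F 0 μ))
            + res (pd (μ, 0) (F d α)) * res (pd (γ, 0) (pd (β, b + 1) (F 0 μ)))) := by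
      rw [← res_add, ← pd_add, hREL d (b + 1) α β, res_pd0_sum_mul]
    have hB := ih (b + 1) α β γ
    have h3 := eq_sub_of_add_eq h2
    rw [hB, ← Finset.sum_sub_distrib] at h3
    have h4 : res (pd (γ, 0) (pd (β, b + 1) (F (d + 1) α)))
        = ∑ μ, res (pd (μ, 0) (F d α)) * res (pd (γ, 0) (pd (β, b + 1) (F 0 μ))) := by
      rw [h3]
      refine Finset.sum_congr rfl fun μ _ => ?_
      ring
    rw [h4]
    have h5 : ∀ μ, res (pd (γ, 0) (pd (β, b + 1) (F 0 μ)))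
        = ∑ ν, res (pd (β, b) (F 0 ν)) * res (pd (γ, 0) (pd (ν, 0) (F 0 μ))) :=
      fun μ => Q0 F hTRR b μ β γ
    calc ∑ μ, res (pd (μ, 0) (F d α)) * res (pd (γ, 0) (pd (β, b + 1) (F 0 μ)))
        = ∑ μ, ∑ ν, res (pd (μ, 0) (F d α))
            * (res (pd (β, b) (F 0 ν)) * res (pd (γ, 0) (pd (ν, 0) (F 0 μ)))) := by
          refine Finset.sum_congr rfl fun μ _ => ?_
          rw [h5 μ, Finset.mul_sum]
      _ = ∑ ν, res (pd (β, b) (F 0 ν)) * res (pd (γ, 0) (pd (ν, 0) (F (d + 1) α))) := by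
          rw [Finset.sum_comm]
          refine Finset.sum_congr rfl fun ν _ => ?_
          rw [star α ν γ, Finset.mul_sum]
          refine Finset.sum_congr rfl fun μ _ => ?_
          ring

lemma StarAll (hTRR : ∀ (b c : ℕ) (α β γ : Fin N),
      pd (β, b + 1) (pd (γ, c) (F 0 α))
      = ∑ μ, pd (β, b) (F 0 μ) * pd (μ, 0) (pd (γ, c) (F 0 α)))
    (hREL : ∀ (a b : ℕ) (α β : Fin N),
      pd (β, b) (F (a + 1) α) + pd (β, b + 1) (F a α)
      = ∑ μ, pd (μ, 0) (F a α) * pd (β, b) (F 0 μ))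
    (d : ℕ) (α ν γ : Fin N) :
    res (pd (γ, 0) (pd (ν, 0) (F (d + 1) α)))
    = ∑ μ, res (pd (μ, 0) (F d α)) * res (pd (γ, 0) (pd (ν, 0) (F 0 μ))) := by
  have h2 : res (pd (γ, 0) (pd (ν, 0) (F (d + 1) α)))
        + res (pd (γ, 0) (pd (ν, 0 + 1) (F d α)))
      = ∑ μ, (res (pd (γ, 0) (pd (μ, 0) (F d α))) * res (pd (ν, 0) (F 0 μ))
          + res (pd (μ, 0) (F d α)) * res (pd (γ, 0) (pd (ν, 0) (F 0 μ)))) := by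
    rw [← res_add, ← pd_add, hREL d 0 α ν, res_pd0_sum_mul]
  have hB := Qall F hTRR hREL d 0 α ν γ
  have h3 := eq_sub_of_add_eq h2
  rw [hB, ← Finset.sum_sub_distrib] at h3
  rw [h3]
  refine Finset.sum_congr rfl fun μ _ => ?_
  ring

end Main

end Aux
open Aux

/-- A collection of descendant vector potentials restricts, at
`t^*_{≥1} = 0`, to the vector potential of a flat F-manifold with unit `A`, and the restricted
first `t_0`-derivatives `Ω^{α,d}_β` form a calibration of it. -/
theorem statement13 {N : ℕ} (p A : Fin N → ℂ) (F : ℕ → Fin N → PS N)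
    (hF : IsDescendant p A F) :
    -- (i) A^μ c^α_{μβ} = δ^α_β
    (∀ α β : Fin N,
        ∑ μ, MvPowerSeries.C (σ := Fin N) (R := ℂ) (A μ) * cN F α μ β
          = if α = β then 1 else 0) ∧
    -- (ii) associativity
    (∀ α β γ δ : Fin N,
        ∑ μ, cN F α β μ * cN F μ γ δ = ∑ μ, cN F α γ μ * cN F μ β δ) ∧
    -- (iii) calibration property, with Ω^{α,−1}_β = δ^α_β
    (∀ α β γ : Fin N, pdN γ (ΩN F 0 α β) = cN F α γ β) ∧
    (∀ (d : ℕ) (α β γ : Fin N),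
        pdN γ (ΩN F (d + 1) α β) = ∑ μ, cN F μ γ β * ΩN F d α μ) := by
  obtain ⟨hStr, -, hTRR, hREL⟩ := hF
  refine ⟨?_, ?_, ?_, ?_⟩
  · -- (i)
    intro α β
    have hFZ0 : FZ p A F 0 α = F 0 α := by
      rw [FZ, if_pos le_rfl]
      norm_num
    have hFZm1 : FZ p A F (0 - 1) α
        = X ((α : Fin N), (0 : ℕ)) + MvPowerSeries.C (σ := Idx N) (R := ℂ) (p α) := by
      rw [show (0 - 1 : ℤ) = -1 by norm_num, FZ, if_neg (by norm_num)]
      rw [if_neg (by norm_num : ¬ Even (-1 : ℤ))]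
      rw [show ((-(-1 : ℤ) - 1).toNat) = 0 by norm_num]
      rw [qs]
      norm_num
    have hstr := hStr 0 α
    rw [hFZ0, hFZm1] at hstr
    have h2 := congrArg (fun G => res (pd ((β : Fin N), (0 : ℕ)) G)) hstr
    rw [pd_sub, res_sub, pd0_stringX, res_stringX, pd_sum, res_sum] at h2
    simp only [pd_Cmul, res_Cmul] at h2
    rw [pd_neg, res_neg, pd_add, pd_X, pd_C, add_zero, res_ite, res_one, res_zero] at h2
    simp only [Prod.mk.injEq, and_true] at h2
    rw [zero_sub, neg_inj] at h2
    calc ∑ μ, MvPowerSeries.C (σ := Fin N) (R := ℂ) (A μ) * cN F α μ β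
        = ∑ μ, MvPowerSeries.C (σ := Fin N) (R := ℂ) (A μ)
            * res (pd (β, 0) (pd (μ, 0) (F 0 α))) := by
          refine Finset.sum_congr rfl fun μ _ => ?_
          rw [cN_eq, pd_comm]
      _ = if β = α then 1 else 0 := h2
      _ = if α = β then 1 else 0 := by simp [eq_comm]
  · -- (ii)
    intro α β γ δ
    have hmain : ∀ β γ δ : Fin N,
        ∑ μ, res (pd (γ, 0) (pd (β, 0) (F 0 μ))) * res (pd (μ, 0) (pd (δ, 0) (F 0 α)))
        = ∑ μ, res (pd (δ, 0) (pd (β, 0) (F 0 μ))) * res (pd (μ, 0) (pd (γ, 0) (F 0 α))) := by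
      intro β γ δ
      have T : ∀ γ δ : Fin N,
          res (pd (δ, 0) (pd (β, 0 + 1) (pd (γ, 0) (F 0 α))))
          = ∑ μ, (res (pd (δ, 0) (pd (β, 0) (F 0 μ)))
                * res (pd (μ, 0) (pd (γ, 0) (F 0 α)))
              + res (pd (β, 0) (F 0 μ))
                * res (pd (δ, 0) (pd (μ, 0) (pd (γ, 0) (F 0 α))))) := by
        intro γ δ
        rw [hTRR 0 0 α β γ, res_pd0_sum_mul]
      have h1 := T γ δ
      have h2 := T δ γ
      have hLHS : res (pd (δ, 0) (pd (β, 0 + 1) (pd (γ, 0) (F 0 α))))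
          = res (pd (γ, 0) (pd (β, 0 + 1) (pd (δ, 0) (F 0 α)))) := by
        rw [pd_comm ((δ, 0) : Idx N) ((β, 0 + 1) : Idx N)]
        rw [pd_comm ((δ, 0) : Idx N) ((γ, 0) : Idx N)]
        rw [pd_comm ((β, 0 + 1) : Idx N) ((γ, 0) : Idx N)]
      rw [hLHS, h2, Finset.sum_add_distrib, Finset.sum_add_distrib] at h1
      have hsym : ∑ μ, res (pd (β, 0) (F 0 μ))
            * res (pd (δ, 0) (pd (μ, 0) (pd (γ, 0) (F 0 α))))
          = ∑ μ, res (pd (β, 0) (F 0 μ))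
            * res (pd (γ, 0) (pd (μ, 0) (pd (δ, 0) (F 0 α)))) := by
        refine Finset.sum_congr rfl fun μ _ => ?_
        rw [pd_comm ((δ, 0) : Idx N) ((μ, 0) : Idx N)]
        rw [pd_comm ((δ, 0) : Idx N) ((γ, 0) : Idx N)]
        rw [pd_comm ((μ, 0) : Idx N) ((γ, 0) : Idx N)]
      rw [hsym] at h1
      exact add_right_cancel h1
    calc ∑ μ, cN F α β μ * cN F μ γ δ
        = ∑ μ, res (pd (γ, 0) (pd (δ, 0) (F 0 μ)))
            * res (pd (μ, 0) (pd (β, 0) (F 0 α))) := by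
          refine Finset.sum_congr rfl fun μ _ => ?_
          rw [cN_eq, cN_eq, mul_comm, pd_comm ((β : Fin N), (0 : ℕ)) ((μ : Fin N), (0 : ℕ))]
      _ = ∑ μ, res (pd (β, 0) (pd (δ, 0) (F 0 μ)))
            * res (pd (μ, 0) (pd (γ, 0) (F 0 α))) := hmain δ γ β
      _ = ∑ μ, cN F α γ μ * cN F μ β δ := by
          refine Finset.sum_congr rfl fun μ _ => ?_
          rw [cN_eq, cN_eq, mul_comm, pd_comm ((γ : Fin N), (0 : ℕ)) ((μ : Fin N), (0 : ℕ))]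
  · -- (iii) d = 0
    intro α β γ
    rw [ΩN, res_pd0, cN_eq, res_pd0, res_pd0]
  · -- (iii) d + 1
    intro d α β γ
    have h := StarAll F hTRR hREL d α β γ
    rw [ΩN, ← res_pd0, h]
    refine Finset.sum_congr rfl fun μ _ => ?_
    rw [cN_eq, ΩN, mul_comm]

end
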